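/- Deleting a unary letter not occurring in the equation preserves solvability and does not increase solution size: if S solves the context equation u = v and the unary letter a does not occur in u = v, then the substitution S' obtained by deleting every a-labelled node from each S(X) and S(x) (splicing the unique child to the parent) is also a solution, and |S'(u)| \leq |S(u)|. -/

import Mathlib

/-- Ground terms over an alphabet. -/
inductive Term (α : Type) : Type
  | node : α → List (Term α) → Term α

/-- Ground contexts: exactly one occurrence of the hole, by construction. -/
inductive GCtx (α : Type) : Type
  | hole : GCtx α
  | node : α → List (Term α) → GCtx α → List (Term α) → GCtx α

/-- Substituting a ground term for the hole of a ground context. -/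
def GCtx.app {α : Type} : GCtx α → Term α → Term α
  | .hole, t => t
  | .node a l c r, t => .node a (l ++ GCtx.app c t :: r)

/-- Terms over the alphabet, first-order variables (`va`), and context variables
(`cv`, of arity one). -/
inductive CT (α V C : Type) : Type
  | va : V → CT α V C
  | cv : C → CT α V C → CT α V C
  | fn : α → List (CT α V C) → CT α V C

/-- Evaluation of a term with variables under a substitution assigning ground terms
to variables and ground contexts to context variables. -/
def ev {α V C : Type} (Sv : V → Term α) (Sc : C → GCtx α) : CT α V C → Term α
  | .va x => Sv x
  | .cv X s => (Sc X).app (ev Sv Sc s)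
  | .fn f ts => .node f (ts.attach.map fun t => ev Sv Sc t.1)
decreasing_by
  all_goals try have h := List.sizeOf_lt_of_mem t.2
  all_goals simp_wf
  all_goals omega

/-- The list of letters occurring in a ground term. -/
def lettersT {α : Type} : Term α → List α
  | .node g ts => g :: (ts.attach.map fun t => lettersT t.1).flatten
decreasing_by
  all_goals try have h := List.sizeOf_lt_of_mem t.2
  all_goals simp_wf
  all_goals omega

/-- The number of nodes of a ground term. -/
def sizeT {α : Type} : Term α → ℕ
  | .node _ ts => 1 + (ts.attach.map fun t => sizeT t.1).sum
decreasing_by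
  all_goals try have h := List.sizeOf_lt_of_mem t.2
  all_goals simp_wf
  all_goals omega

/-- The list of letters occurring in a ground context. -/
def lettersG {α : Type} : GCtx α → List α
  | .hole => []
  | .node g l c r =>
      g :: ((l.map lettersT).flatten ++ lettersG c ++ (r.map lettersT).flatten)

/-- Well-formedness of a ground term w.r.t. an arity function. -/
def wfT {α : Type} (ar : α → ℕ) : Term α → Prop
  | .node g ts =>
      ts.length = ar g ∧ ((ts.attach.map fun t => wfT ar t.1).foldr (· ∧ ·) True)
decreasing_by
  all_goals try have h := List.sizeOf_lt_of_mem t.2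
  all_goals simp_wf
  all_goals omega

/-- Well-formedness of a ground context w.r.t. an arity function. -/
def wfG {α : Type} (ar : α → ℕ) : GCtx α → Prop
  | .hole => True
  | .node g l c r =>
      l.length + 1 + r.length = ar g ∧ (∀ t ∈ l, wfT ar t) ∧ wfG ar c ∧
        (∀ t ∈ r, wfT ar t)

/-- The list of letters occurring in a term with variables. -/
def lettersCT {α V C : Type} : CT α V C → List α
  | .va _ => []
  | .cv _ s => lettersCT s
  | .fn f ts => f :: (ts.attach.map fun t => lettersCT t.1).flatten
decreasing_by
  all_goals try have h := List.sizeOf_lt_of_mem t.2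
  all_goals simp_wf
  all_goals omega

/-- Deleting every node labelled by the unary letter `a` from a ground term: each
subterm `a(t)` is replaced by `t` (the unique child is spliced to the parent). -/
def delA {α : Type} [DecidableEq α] (a : α) : Term α → Term α
  | .node g [t] => if g = a then delA a t else .node g [delA a t]
  | .node g ts => .node g (ts.attach.map fun t => delA a t.1)
decreasing_by
  all_goals try have hh := List.sizeOf_lt_of_mem t.2
  all_goals simp_wf
  all_goals omega

/-- Deleting every node labelled by the unary letter `a` from a ground context. -/
def delG {α : Type} [DecidableEq α] (a : α) : GCtx α → GCtx α
  | .hole => .hole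
  | .node g [] c [] => if g = a then delG a c else .node g [] (delG a c) []
  | .node g l c r => .node g (l.map (delA a)) (delG a c) (r.map (delA a))

theorem delA_nil {α : Type} [DecidableEq α] (a g : α) :
    delA a (.node g []) = .node g [] := by
  rw [delA]; simp; intro t h; simp at h

theorem delA_cons2 {α : Type} [DecidableEq α] (a g : α) (x y : Term α) (ts : List (Term α)) :
    delA a (.node g (x::y::ts)) = .node g ((x::y::ts).map (delA a)) := by
  rw [delA]
  · simp [List.attach_map_val]
  · intro t h; simp at h

theorem delA_ne {α : Type} [DecidableEq α] {a g : α} (h : g ≠ a) (ts : List (Term α)) :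
    delA a (.node g ts) = .node g (ts.map (delA a)) := by
  match ts with
  | [] => rw [delA_nil]; rfl
  | [t] => rw [delA]; simp [h]
  | x::y::ts => rw [delA_cons2]

theorem sizeT_node {α : Type} (g : α) (ts : List (Term α)) :
    sizeT (.node g ts) = 1 + (ts.map sizeT).sum := by
  rw [sizeT]; simp [List.attach_map_val]

theorem delA_nonsingle {α : Type} [DecidableEq α] (a g : α) {ts : List (Term α)}
    (hne : ∀ (t : Term α), ts = [t] → False) :
    delA a (.node g ts) = .node g (ts.map (delA a)) := by
  match ts with
  | [] => rw [delA_nil]; rfl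
  | [t] => exact absurd rfl (hne t)
  | x::y::ts => rw [delA_cons2]

theorem sizeT_delA {α : Type} [DecidableEq α] (a : α) (t : Term α) :
    sizeT (delA a t) ≤ sizeT t := by
  induction t using delA.induct a with
  | case1 t ih =>
    rw [delA]; simp only [if_pos rfl]
    calc sizeT (delA a t) ≤ sizeT t := ih
      _ ≤ sizeT (Term.node a [t]) := by rw [sizeT_node]; simp
  | case2 g t hg ih =>
    rw [delA_ne hg, sizeT_node, sizeT_node]; simpa using ih
  | case3 g ts hne ih =>
    rw [delA_nonsingle a g hne, sizeT_node, sizeT_node, List.map_map]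
    have : ((ts.map (sizeT ∘ delA a)).sum) ≤ (ts.map sizeT).sum :=
      List.sum_le_sum (fun t ht => ih ⟨t, ht⟩)
    omega

theorem delG_ne {α : Type} [DecidableEq α] (a g : α) (l : List (Term α)) (c : GCtx α)
    (r : List (Term α)) (hne : l = [] → r = [] → False) :
    delG a (.node g l c r) = .node g (l.map (delA a)) (delG a c) (r.map (delA a)) := by
  match l, r, hne with
  | [], [], h => exact absurd rfl (fun h2 => h rfl h2)
  | x::l, r, _ => rw [delG]; intro h; cases h
  | [], y::r, _ => rw [delG]; intro _ h; cases h

theorem delA_app {α : Type} [DecidableEq α] (a : α) (c : GCtx α) (t : Term α) :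
    delA a (c.app t) = (delG a c).app (delA a t) := by
  induction c using delG.induct a with
  | case1 => rfl
  | case2 c ih =>
    rw [GCtx.app, delG, if_pos rfl]
    simp only [List.nil_append]
    rw [delA, if_pos rfl, ih]
  | case3 g c hg ih =>
    rw [GCtx.app, delG, if_neg hg, GCtx.app]
    simp only [List.nil_append]
    rw [delA, if_neg hg, ih]
  | case4 g l c r hne ih =>
    have hne2 : ∀ (s : Term α), l ++ GCtx.app c t :: r = [s] → False := by
      intro s h
      have := congrArg List.length h
      simp at this
      exact hne (List.length_eq_zero_iff.mp (by omega)) (List.length_eq_zero_iff.mp (by omega))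
    rw [GCtx.app, delG_ne a g l c r hne, GCtx.app,
      delA_nonsingle a g hne2]
    simp [ih]

theorem ev_del {α V C : Type} [DecidableEq α] (a : α) (Sv : V → Term α) (Sc : C → GCtx α)
    (u : CT α V C) (ha : a ∉ lettersCT u) :
    ev (fun x => delA a (Sv x)) (fun X => delG a (Sc X)) u = delA a (ev Sv Sc u) := by
  induction u using ev.induct with
  | case1 x => simp only [ev]
  | case2 X s ih =>
    rw [ev, ev, delA_app, ih (by rwa [lettersCT] at ha)]
  | case3 f ts ih =>
    rw [lettersCT] at ha
    simp only [List.mem_cons, not_or] at ha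
    have hf : f ≠ a := fun h => ha.1 h.symm
    rw [ev, ev, delA_ne hf, List.map_map]
    congr 1
    apply List.map_congr_left
    intro t _
    apply ih
    intro hmem
    exact ha.2 (by
      simp only [List.mem_flatten, List.mem_map]
      exact ⟨lettersCT t.1, ⟨t, by simp, rfl⟩, hmem⟩)

/-- if `S = (Sv, Sc)` solves the context equation `u = v` and the unary
letter `a` does not occur in the equation, then deleting every `a`-labelled node from
all images of the (context) variables again yields a solution, whose size is not
larger. -/
theorem stmt_18 {α V C : Type} [DecidableEq α] (ar : α → ℕ) (a : α) (ha1 : ar a = 1)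
    (u v : CT α V C) (Sv : V → Term α) (Sc : C → GCtx α)
    (hwf1 : ∀ x, wfT ar (Sv x)) (hwf2 : ∀ X, wfG ar (Sc X))
    (hau : a ∉ lettersCT u) (hav : a ∉ lettersCT v)
    (hsol : ev Sv Sc u = ev Sv Sc v) :
    ev (fun x => delA a (Sv x)) (fun X => delG a (Sc X)) u =
      ev (fun x => delA a (Sv x)) (fun X => delG a (Sc X)) v ∧
    sizeT (ev (fun x => delA a (Sv x)) (fun X => delG a (Sc X)) u) ≤
      sizeT (ev Sv Sc u) := by
  refine ⟨?_, ?_⟩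
  · rw [ev_del a Sv Sc u hau, ev_del a Sv Sc v hav, hsol]
  · rw [ev_del a Sv Sc u hau]
    exact sizeT_delA a _
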